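/- Let K ⊆ ℝ^n be a nonempty closed convex set, d : ℝ^n → ℝ twice continuously differentiable and m-strongly convex (m > 0), and c > 0. For each (λ, η) let ω^c(λ, η) denote the unique maximizer of ω ↦ L^c(λ, η, ω) over K. Then the generalized primal gap function φ^c is differentiable at every (λ, η) ∈ ℝ^n × ℝ^n, with partial gradients ∇_λ φ^c(λ, η) = η − c·∇²d(λ)·(λ − ω^c(λ, η)) and ∇_η φ^c(λ, η) = λ − ω^c(λ, η), where ∇²d(λ) is the Hessian matrix of d at λ. -/

import Mathlib

open scoped RealInnerProductSpace

/-- Auchmuty's function `L^c(λ, η, ω) = c·d(λ) − c·d(ω) + ⟨η − c·∇d(λ), λ − ω⟩`. -/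
noncomputable def Auchmuty {n : ℕ} (c : ℝ) (d : EuclideanSpace ℝ (Fin n) → ℝ)
    (lam eta om : EuclideanSpace ℝ (Fin n)) : ℝ :=
  c * d lam - c * d om + ⟪eta - c • gradient d lam, lam - om⟫

/-- The generalized primal gap function `φ^c(λ, η) = sup_{ω ∈ K} L^c(λ, η, ω)`. -/
noncomputable def primalGap {n : ℕ} (K : Set (EuclideanSpace ℝ (Fin n))) (c : ℝ)
    (d : EuclideanSpace ℝ (Fin n) → ℝ) (lam eta : EuclideanSpace ℝ (Fin n)) : ℝ :=
  sSup (Auchmuty c d lam eta '' K)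

/-- Value function of a strongly concave maximization is differentiable. -/
lemma aux_conj_hasFDerivAt {E : Type*} [NormedAddCommGroup E] [InnerProductSpace ℝ E]
    (φ : E → ℝ) (q : ℝ) (hq : 0 < q) (W : E → E)
    (hWmax : ∀ v : E, ∀ ω ∈ Set.range W, φ ω - ⟪v, ω⟫ + q * ‖ω - W v‖ ^ 2
      ≤ φ (W v) - ⟪v, W v⟫) (v : E) :
    HasFDerivAt (fun u => φ (W u) - ⟪u, W u⟫) (innerSL ℝ (-(W v))) v := by
  have hlip : ∀ u : E, ‖W v - W u‖ ≤ (2 * q)⁻¹ * ‖u - v‖ := by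
    intro u
    have h1 := hWmax v (W u) ⟨u, rfl⟩
    have h2 := hWmax u (W v) ⟨v, rfl⟩
    rw [norm_sub_rev (W u)] at h1
    set D := ‖W v - W u‖ with hD
    have hDnn : 0 ≤ D := norm_nonneg _
    have e2 : ⟪u - v, W v - W u⟫ = ⟪u, W v⟫ - ⟪u, W u⟫ - ⟪v, W v⟫ + ⟪v, W u⟫ := by
      simp [inner_sub_left, inner_sub_right]; ring
    have hkey : 2 * q * D ^ 2 ≤ ⟪u - v, W v - W u⟫ := by rw [e2]; linarith
    have hcs : ⟪u - v, W v - W u⟫ ≤ ‖u - v‖ * D := real_inner_le_norm _ _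
    rcases eq_or_lt_of_le hDnn with h | h
    · rw [← h]; positivity
    · rw [le_inv_mul_iff₀ (by positivity)]
      have : (2 * q * D) * D ≤ ‖u - v‖ * D := by nlinarith
      exact le_of_mul_le_mul_right this h
  have hsand : ∀ u : E, 0 ≤ (φ (W u) - ⟪u, W u⟫) - (φ (W v) - ⟪v, W v⟫) + ⟪u - v, W v⟫ ∧
      (φ (W u) - ⟪u, W u⟫) - (φ (W v) - ⟪v, W v⟫) + ⟪u - v, W v⟫ ≤ (2*q)⁻¹ * ‖u - v‖^2 := by
    intro u
    have h1 := hWmax v (W u) ⟨u, rfl⟩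
    have h2 := hWmax u (W v) ⟨v, rfl⟩
    have e3 : ⟪u - v, W v⟫ = ⟪u, W v⟫ - ⟪v, W v⟫ := by rw [inner_sub_left]
    have e4 : ⟪u - v, W u⟫ = ⟪u, W u⟫ - ⟪v, W u⟫ := by rw [inner_sub_left]
    constructor
    · have hq2 : 0 ≤ q * ‖W v - W u‖^2 := by positivity
      linarith
    · have hub : (φ (W u) - ⟪u, W u⟫) - (φ (W v) - ⟪v, W v⟫) + ⟪u - v, W v⟫
          ≤ ⟪u - v, W v - W u⟫ := by
        have hq1 : 0 ≤ q * ‖W u - W v‖^2 := by positivity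
        rw [inner_sub_right, e3, e4]; linarith
      refine hub.trans ?_
      calc ⟪u - v, W v - W u⟫ ≤ ‖u - v‖ * ‖W v - W u‖ := real_inner_le_norm _ _
        _ ≤ ‖u - v‖ * ((2*q)⁻¹ * ‖u - v‖) :=
            mul_le_mul_of_nonneg_left (hlip u) (norm_nonneg _)
        _ = (2*q)⁻¹ * ‖u - v‖^2 := by ring
  rw [hasFDerivAt_iff_isLittleO_nhds_zero, Asymptotics.isLittleO_iff]
  intro ε hε
  have hball : ∀ᶠ h : E in nhds 0, ‖h‖ < ε * (2*q) := by
    have : Metric.ball (0:E) (ε * (2*q)) ∈ nhds (0:E) :=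
      Metric.ball_mem_nhds _ (by positivity)
    filter_upwards [this] with h hh
    simpa [dist_eq_norm] using hh
  filter_upwards [hball] with h hh
  have hs := hsand (v + h)
  have e5 : v + h - v = h := by abel
  rw [e5] at hs
  have e6 : (innerSL ℝ (-(W v))) h = -⟪W v, h⟫ := by simp
  have e7 : ⟪h, W v⟫ = ⟪W v, h⟫ := real_inner_comm _ _
  rw [Real.norm_eq_abs, abs_le]
  constructor
  · rw [e6]
    have := hs.1
    rw [e7] at this
    nlinarith [norm_nonneg h, hε.le, mul_nonneg hε.le (norm_nonneg h)]
  · rw [e6]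
    have := hs.2
    rw [e7] at this
    have hb : (2*q)⁻¹ * ‖h‖^2 ≤ ε * ‖h‖ := by
      rcases eq_or_lt_of_le (norm_nonneg h) with h0 | h0
      · rw [← h0]; simp
      · have h3 : (2*q)⁻¹ * ‖h‖ ≤ ε := by
          rw [inv_mul_le_iff₀ (by positivity)]
          nlinarith
        nlinarith
    linarith

noncomputable def TdualE (E : Type*) [NormedAddCommGroup E] [InnerProductSpace ℝ E]
    [CompleteSpace E] : StrongDual ℝ E ≃L[ℝ] E :=
  (InnerProductSpace.toDual ℝ E).symm.toContinuousLinearEquiv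

noncomputable def Tdual (E : Type*) [NormedAddCommGroup E] [InnerProductSpace ℝ E]
    [CompleteSpace E] : StrongDual ℝ E →L[ℝ] E := (TdualE E).toContinuousLinearMap

@[simp] lemma Tdual_apply {E : Type*} [NormedAddCommGroup E] [InnerProductSpace ℝ E]
    [CompleteSpace E] (x : StrongDual ℝ E) :
    Tdual E x = (InnerProductSpace.toDual ℝ E).symm x := rfl

section hessian
variable {E : Type*} [NormedAddCommGroup E] [InnerProductSpace ℝ E] [CompleteSpace E]
  (d : E → ℝ)

theorem gradient_differentiable (hd2 : ContDiff ℝ 2 d) : Differentiable ℝ (gradient d) := by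
  have h1 : ContDiff ℝ 1 (fderiv ℝ d) := hd2.fderiv_right (by norm_num)
  exact ((Tdual E).differentiable).comp (h1.differentiable (by norm_num))

theorem hessian_symm_inner (hd2 : ContDiff ℝ 2 d) (lam : E) (u w : E) :
    ⟪fderiv ℝ (gradient d) lam u, w⟫ = ⟪fderiv ℝ (gradient d) lam w, u⟫ := by
  have hd_diff : Differentiable ℝ d := hd2.differentiable (by norm_num)
  have h1 : ContDiff ℝ 1 (fderiv ℝ d) := hd2.fderiv_right (by norm_num)
  have hf'' : HasFDerivAt (fderiv ℝ d) (fderiv ℝ (fderiv ℝ d) lam) lam :=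
    (h1.differentiable (by norm_num) lam).hasFDerivAt
  have hsymm := second_derivative_symmetric (fun y => (hd_diff y).hasFDerivAt) hf''
  have hG : HasFDerivAt (gradient d)
      ((Tdual E).comp (fderiv ℝ (fderiv ℝ d) lam)) lam :=
    (Tdual E).hasFDerivAt.comp lam hf''
  have hH : fderiv ℝ (gradient d) lam = (Tdual E).comp (fderiv ℝ (fderiv ℝ d) lam) :=
    hG.fderiv
  have key : ∀ a b : E,
      ⟪fderiv ℝ (gradient d) lam a, b⟫ = fderiv ℝ (fderiv ℝ d) lam a b := by
    intro a b
    rw [hH, ← InnerProductSpace.toDual_apply_apply (𝕜 := ℝ)]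
    simp
  rw [key, key, hsymm]
end hessian

set_option maxHeartbeats 1000000 in
theorem stmt10 {n : ℕ} (hn : 0 < n) (K : Set (EuclideanSpace ℝ (Fin n)))
    (hK : K.Nonempty) (hKclosed : IsClosed K) (hKconvex : Convex ℝ K)
    (d : EuclideanSpace ℝ (Fin n) → ℝ) (hd2 : ContDiff ℝ 2 d)
    (m : ℝ) (hm : 0 < m)
    (hstrong : ∀ x y : EuclideanSpace ℝ (Fin n),
      d x + ⟪gradient d x, y - x⟫ + m / 2 * ‖y - x‖ ^ 2 ≤ d y)
    (c : ℝ) (hc : 0 < c)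
    (omc : EuclideanSpace ℝ (Fin n) → EuclideanSpace ℝ (Fin n) → EuclideanSpace ℝ (Fin n))
    (homcK : ∀ lam eta, omc lam eta ∈ K)
    (homcmax : ∀ lam eta, ∀ om ∈ K,
      Auchmuty c d lam eta om ≤ Auchmuty c d lam eta (omc lam eta)) :
    ∀ lam eta : EuclideanSpace ℝ (Fin n),
      DifferentiableAt ℝ
        (fun p : EuclideanSpace ℝ (Fin n) × EuclideanSpace ℝ (Fin n) =>
          primalGap K c d p.1 p.2) (lam, eta) ∧
      gradient (fun l => primalGap K c d l eta) lam
        = eta - c • fderiv ℝ (gradient d) lam (lam - omc lam eta) ∧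
      gradient (fun e => primalGap K c d lam e) eta = lam - omc lam eta := by
  intro lam eta
  have hd_diff : Differentiable ℝ d := hd2.differentiable (by norm_num)
  have hGdiff : Differentiable ℝ (gradient d) := gradient_differentiable d hd2
  set W : EuclideanSpace ℝ (Fin n) → EuclideanSpace ℝ (Fin n) :=
    fun v => omc lam (v + c • gradient d lam) with hWdef
  have hWK : ∀ v, W v ∈ K := fun v => homcK _ _
  have hA : ∀ (l e ω : EuclideanSpace ℝ (Fin n)), Auchmuty c d l e ω
      = (c * d l + ⟪e - c • gradient d l, l⟫) + (-(c * d ω) - ⟪e - c • gradient d l, ω⟫) := by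
    intro l e ω
    simp only [Auchmuty, inner_sub_right]
    ring
  have hWmax0 : ∀ v : EuclideanSpace ℝ (Fin n), ∀ ω ∈ K,
      -(c * d ω) - ⟪v, ω⟫ ≤ -(c * d (W v)) - ⟪v, W v⟫ := by
    intro v ω hω
    have h := homcmax lam (v + c • gradient d lam) ω hω
    rw [hA, hA, add_sub_cancel_right] at h
    linarith
  have hWmaxq : ∀ v : EuclideanSpace ℝ (Fin n), ∀ ω ∈ K,
      (-(c * d ω) - ⟪v, ω⟫) + (c * m / 4) * ‖ω - W v‖^2 ≤ -(c * d (W v)) - ⟪v, W v⟫ := by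
    intro v ω hω
    set w := W v with hw
    set z := (2:ℝ)⁻¹ • ω + (2:ℝ)⁻¹ • w with hz
    have hzK : z ∈ K := hKconvex hω (hWK v) (by norm_num) (by norm_num) (by norm_num)
    have h1 := hstrong z ω
    have h2 := hstrong z w
    have e1 : ω - z = (2:ℝ)⁻¹ • (ω - w) := by rw [hz]; module
    have e2 : w - z = -((2:ℝ)⁻¹ • (ω - w)) := by rw [hz]; module
    have einner : ⟪gradient d z, ω - z⟫ + ⟪gradient d z, w - z⟫ = 0 := by
      rw [e1, e2, inner_neg_right]; ring
    have enorm1 : ‖ω - z‖^2 = (1/4) * ‖ω - w‖^2 := by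
      rw [e1, norm_smul, Real.norm_eq_abs, mul_pow]
      norm_num
    have enorm2 : ‖w - z‖^2 = (1/4) * ‖ω - w‖^2 := by
      rw [e2, norm_neg, norm_smul, Real.norm_eq_abs, mul_pow]
      norm_num
    rw [enorm1] at h1
    rw [enorm2] at h2
    have hmid : 2 * d z + (m/4) * ‖ω - w‖^2 ≤ d ω + d w := by linarith
    have hmidc := mul_le_mul_of_nonneg_left hmid hc.le
    have hlin : ⟪v, ω⟫ + ⟪v, w⟫ = 2 * ⟪v, z⟫ := by
      rw [hz]
      simp [inner_add_right, inner_smul_right]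
      ring
    have hz0 := hWmax0 v z hzK
    nlinarith [hmidc, hz0, hlin]
  have hWmaxR : ∀ v : EuclideanSpace ℝ (Fin n), ∀ ω ∈ Set.range W,
      (fun t => -(c * d t)) ω - ⟪v, ω⟫ + (c * m / 4) * ‖ω - W v‖ ^ 2
      ≤ (fun t => -(c * d t)) (W v) - ⟪v, W v⟫ := by
    rintro v ω ⟨u, rfl⟩
    exact hWmaxq v (W u) (hWK u)
  have hgderiv : ∀ v : EuclideanSpace ℝ (Fin n),
      HasFDerivAt (fun u => (fun t => -(c * d t)) (W u) - ⟪u, W u⟫) (innerSL ℝ (-(W v))) v :=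
    fun v => aux_conj_hasFDerivAt (fun t => -(c * d t)) (c * m / 4) (by positivity) W hWmaxR v
  set g : EuclideanSpace ℝ (Fin n) → ℝ := fun u => -(c * d (W u)) - ⟪u, W u⟫ with hgdef
  have hφ : ∀ l e : EuclideanSpace ℝ (Fin n), primalGap K c d l e
      = (c * d l + ⟪e - c • gradient d l, l⟫) + g (e - c • gradient d l) := by
    intro l e
    have hgr : IsGreatest (Auchmuty c d l e '' K)
        (Auchmuty c d l e (W (e - c • gradient d l))) := by
      constructor
      · exact ⟨_, hWK _, rfl⟩
      · rintro y ⟨ω, hω, rfl⟩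
        rw [hA, hA]
        have := hWmax0 (e - c • gradient d l) ω hω
        linarith
    rw [primalGap, hgr.csSup_eq, hA]
  -- the point
  set v₀ : EuclideanSpace ℝ (Fin n) := eta - c • gradient d lam with hv₀
  have hWv₀ : W v₀ = omc lam eta := by
    rw [hWdef]
    simp only [hv₀, sub_add_cancel]
  -- part 1: differentiability
  have hgdiffat : ∀ v, DifferentiableAt ℝ g v := fun v => (hgderiv v).differentiableAt
  refine ⟨?_, ?_, ?_⟩
  · have : (fun p : EuclideanSpace ℝ (Fin n) × EuclideanSpace ℝ (Fin n) =>
        primalGap K c d p.1 p.2)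
        = fun p => (c * d p.1 + ⟪p.2 - c • gradient d p.1, p.1⟫)
          + g (p.2 - c • gradient d p.1) := by
      funext p; exact hφ p.1 p.2
    rw [this]
    have h1 : DifferentiableAt ℝ
        (fun p : EuclideanSpace ℝ (Fin n) × EuclideanSpace ℝ (Fin n) => d p.1) (lam, eta) :=
      (hd_diff lam).comp _ differentiableAt_fst
    have h2 : DifferentiableAt ℝ
        (fun p : EuclideanSpace ℝ (Fin n) × EuclideanSpace ℝ (Fin n) => gradient d p.1)
        (lam, eta) := by
        have := hGdiff.comp (differentiable_fst : Differentiable ℝ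
          (Prod.fst : EuclideanSpace ℝ (Fin n) × EuclideanSpace ℝ (Fin n) → _))
        exact this (lam, eta)
    have hinner_map : DifferentiableAt ℝ
        (fun p : EuclideanSpace ℝ (Fin n) × EuclideanSpace ℝ (Fin n) =>
          p.2 - c • gradient d p.1) (lam, eta) :=
      differentiableAt_snd.sub (h2.const_smul c)
    refine ((h1.const_mul c).add (DifferentiableAt.inner ℝ hinner_map differentiableAt_fst)).add ?_
    exact (hgdiffat _).comp _ hinner_map
  · -- gradient in λ
    have hrw : (fun l => primalGap K c d l eta)
        = fun l => (c * d l + ⟪eta - c • gradient d l, l⟫) + g (eta - c • gradient d l) := by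
      funext l; exact hφ l eta
    rw [hrw, ← hWv₀]
    apply HasGradientAt.gradient
    rw [hasGradientAt_iff_hasFDerivAt]
    have hHat : HasFDerivAt (gradient d) (fderiv ℝ (gradient d) lam) lam :=
      (hGdiff lam).hasFDerivAt
    set H := fderiv ℝ (gradient d) lam with hHdef
    have ha : HasFDerivAt (fun l => c * d l)
        (c • InnerProductSpace.toDual ℝ _ (gradient d lam)) lam :=
      ((hd_diff lam).hasGradientAt.hasFDerivAt).const_mul c
    have hf : HasFDerivAt (fun l : EuclideanSpace ℝ (Fin n) => eta - c • gradient d l)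
        (-(c • H)) lam := (hHat.const_smul c).const_sub eta
    have hb : HasFDerivAt (fun l : EuclideanSpace ℝ (Fin n) => ⟪eta - c • gradient d l, l⟫)
        ((fderivInnerCLM ℝ (eta - c • gradient d lam, lam)).comp
          ((-(c • H)).prod (ContinuousLinearMap.id ℝ _))) lam :=
      hf.inner ℝ (hasFDerivAt_id lam)
    have hcp : HasFDerivAt (fun l : EuclideanSpace ℝ (Fin n) => g (eta - c • gradient d l))
        ((innerSL ℝ (-(W v₀))).comp (-(c • H))) lam := by
        have := (hgderiv v₀).comp lam hf
        exact this
    have hsum := (ha.add hb).add hcp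
    have heq : InnerProductSpace.toDual ℝ (EuclideanSpace ℝ (Fin n))
        (eta - c • H (lam - W v₀))
        = ((c • InnerProductSpace.toDual ℝ _ (gradient d lam))
            + (fderivInnerCLM ℝ (eta - c • gradient d lam, lam)).comp
              ((-(c • H)).prod (ContinuousLinearMap.id ℝ _)))
          + (innerSL ℝ (-(W v₀))).comp (-(c • H)) := by
      ext u
      have s1 : ⟪H (lam - W v₀), u⟫ = ⟪H u, lam - W v₀⟫ :=
        hessian_symm_inner d hd2 lam (lam - W v₀) u
      simp only [InnerProductSpace.toDual_apply_apply, ContinuousLinearMap.add_apply,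
        ContinuousLinearMap.coe_smul', Pi.smul_apply, ContinuousLinearMap.comp_apply,
        ContinuousLinearMap.prod_apply, ContinuousLinearMap.neg_apply,
        ContinuousLinearMap.coe_id', id_eq, fderivInnerCLM_apply, innerSL_apply_apply,
        inner_sub_left, inner_sub_right, inner_neg_left, inner_neg_right,
        inner_smul_left, inner_smul_right, smul_eq_mul, RCLike.star_def, starRingEnd_apply,
        star_trivial]
      rw [inner_sub_right] at s1
      have c1 : ⟪u, lam⟫ = ⟪lam, u⟫ := real_inner_comm _ _
      have c2 : ⟪W v₀, H u⟫ = ⟪H u, W v₀⟫ := real_inner_comm _ _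
      have c3 : ⟪gradient d lam, u⟫ = ⟪u, gradient d lam⟫ := real_inner_comm _ _
      linear_combination (-c) * s1 + (-c) * c2
    rw [heq]
    exact hsum
  · -- gradient in η
    have hrw : (fun e => primalGap K c d lam e)
        = fun e => (c * d lam + ⟪e - c • gradient d lam, lam⟫)
          + g (e - c • gradient d lam) := by
      funext e; exact hφ lam e
    rw [hrw, ← hWv₀]
    apply HasGradientAt.gradient
    rw [hasGradientAt_iff_hasFDerivAt]
    have hB : HasFDerivAt (fun e : EuclideanSpace ℝ (Fin n) => ⟪e - c • gradient d lam, lam⟫)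
        (innerSL ℝ lam) eta := by
      have : (fun e : EuclideanSpace ℝ (Fin n) => ⟪e - c • gradient d lam, lam⟫)
          = fun e => (innerSL ℝ lam) e - ⟪lam, c • gradient d lam⟫ := by
        funext e
        rw [innerSL_apply_apply, real_inner_comm, inner_sub_right]
      rw [this]
      exact (innerSL ℝ lam).hasFDerivAt.sub_const _
    have hC : HasFDerivAt (fun e : EuclideanSpace ℝ (Fin n) => g (e - c • gradient d lam))
        ((innerSL ℝ (-(W v₀))).comp (ContinuousLinearMap.id ℝ _)) eta := by
      exact (hgderiv v₀).comp eta ((hasFDerivAt_id eta).sub_const _)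
    have hsum := ((hasFDerivAt_const (c * d lam) eta).add hB).add hC
    have heq : InnerProductSpace.toDual ℝ _ (lam - W v₀)
        = ((0 : _ →L[ℝ] ℝ) + innerSL ℝ lam) + (innerSL ℝ (-(W v₀))).comp
          (ContinuousLinearMap.id ℝ _) := by
      ext u
      simp [inner_sub_left]
      ring
    rw [heq]
    exact hsum
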